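/- Let A be a symmetrically contractible Banach algebra with symmetric diagonal M = Σ aₙ⊗bₙ (i.e., the flip of M equals M). Then the map τ: A → Z(A), τ(c) = Σ aₙ c bₙ, is a bounded Z(A)-valued trace: τ(cc') = τ(c'c) for all c, c' ∈ A, and τ(1) = 1. -/

import Mathlib

/-- A Banach `A`-bimodule structure on a normed space `E`. -/
structure BanachBimodule (A E : Type) [NonUnitalNormedRing A] [NormedSpace ℂ A]
    [NormedAddCommGroup E] [NormedSpace ℂ E] where
  l : A →L[ℂ] E →L[ℂ] E
  r : A →L[ℂ] E →L[ℂ] E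
  l_mul : ∀ a b x, l (a * b) x = l a (l b x)
  r_mul : ∀ a b x, r (a * b) x = r b (r a x)
  lr_comm : ∀ a b x, l a (r b x) = r b (l a x)

/-- A Banach algebra `A` is contractible if every bounded derivation from `A`
into any Banach `A`-bimodule is inner. -/
def Contractible (A : Type) [NonUnitalNormedRing A] [NormedSpace ℂ A] : Prop :=
  ∀ (E : Type) [NormedAddCommGroup E] [NormedSpace ℂ E] [CompleteSpace E],
    ∀ (B : BanachBimodule A E) (D : A →L[ℂ] E),
      (∀ a b, D (a * b) = B.l a (D b) + B.r b (D a)) →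
      ∃ v : E, ∀ a, D a = B.l a v - B.r a v

/-- The families `a b : ι → A` represent a diagonal `M = Σ aₙ ⊗ bₙ` of the
unital Banach algebra `A` in the completed projective tensor product `A ⊗^γ A`:
the representing series is absolutely convergent, `Δ(M) = 1`, and
`(c ⊗ 1) M = M (1 ⊗ c)` for all `c` (the latter equality in `A ⊗^γ A` being
tested against all bounded bilinear functionals, which separate the points
of `A ⊗^γ A`). -/
def IsDiagonal {A : Type} [NormedRing A] [NormedAlgebra ℂ A] {ι : Type}
    (a b : ι → A) : Prop :=
  Summable (fun n => ‖a n‖ * ‖b n‖) ∧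
  (∑' n, a n * b n) = 1 ∧
  ∀ (φ : A →L[ℂ] A →L[ℂ] ℂ) (c : A),
    (∑' n, φ (c * a n) (b n)) = ∑' n, φ (a n) (b n * c)

/-- a symmetric diagonal `M = Σ aₙ ⊗ bₙ` (i.e. the flip of `M`
equals `M`, tested against all bounded bilinear functionals) of a symmetrically
contractible Banach algebra gives rise to a bounded `Z(A)`-valued normalized
trace `τ(c) = Σ aₙ c bₙ`. -/
theorem symmetric_diagonal_trace
    (A : Type) [NormedRing A] [NormedAlgebra ℂ A] [CompleteSpace A]
    (hA : Contractible A) (a b : ℕ → A) (hdiag : IsDiagonal a b)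
    (hsymm : ∀ φ : A →L[ℂ] A →L[ℂ] ℂ,
      (∑' n, φ (a n) (b n)) = ∑' n, φ (b n) (a n)) :
    ∃ τ : A →L[ℂ] A,
      (∀ c, τ c = ∑' n, a n * c * b n) ∧
      (∀ c z, τ c * z = z * τ c) ∧
      τ 1 = 1 ∧
      ∀ c c', τ (c * c') = τ (c' * c) := by
  obtain ⟨hsum, hunit, hmod⟩ := hdiag
  -- summability of the defining series
  have hsummand : ∀ c : A, Summable (fun n => a n * c * b n) := by
    intro c
    refine Summable.of_norm_bounded (g := fun n => ‖c‖ * (‖a n‖ * ‖b n‖)) (hsum.mul_left _) ?_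
    intro n
    calc ‖a n * c * b n‖ ≤ ‖a n * c‖ * ‖b n‖ := norm_mul_le _ _
      _ ≤ ‖a n‖ * ‖c‖ * ‖b n‖ := by gcongr; exact norm_mul_le _ _
      _ = ‖c‖ * (‖a n‖ * ‖b n‖) := by ring
  -- the elementary operators c ↦ aₙ c bₙ
  set T : ℕ → A →L[ℂ] A := fun n =>
    (ContinuousLinearMap.mul ℂ A (a n)).comp ((ContinuousLinearMap.mul ℂ A).flip (b n)) with hT
  have hTapply : ∀ n c, T n c = a n * c * b n := by
    intro n c; simp [hT, mul_assoc]
  have hTsumm : Summable T := by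
    refine Summable.of_norm_bounded hsum fun n => ?_
    refine le_trans (ContinuousLinearMap.opNorm_comp_le _ _) ?_
    gcongr
    · exact ContinuousLinearMap.opNorm_mul_apply_le ℂ A (a n)
    · refine ContinuousLinearMap.opNorm_le_bound _ (norm_nonneg _) fun x => ?_
      simpa [mul_comm] using norm_mul_le x (b n)
  have hτ : ∀ c, (∑' n, T n) c = ∑' n, a n * c * b n := by
    intro c
    have h := (ContinuousLinearMap.apply ℂ A c).map_tsum hTsumm
    simp only [ContinuousLinearMap.apply_apply] at h
    rw [h]; exact tsum_congr fun n => hTapply n c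
  -- separation of points by the dual
  have hsep : ∀ x y : A, (∀ f : A →L[ℂ] ℂ, f x = f y) → x = y := fun x y h =>
    NormedSpace.eq_iff_forall_dual_eq (𝕜 := ℂ) |>.mpr h
  -- the bounded bilinear functionals (x, y) ↦ f (x * c * y)
  set φ : (A →L[ℂ] ℂ) → A → (A →L[ℂ] A →L[ℂ] ℂ) := fun f c =>
    ((ContinuousLinearMap.compL ℂ A A ℂ f).comp (ContinuousLinearMap.mul ℂ A)).comp
      ((ContinuousLinearMap.mul ℂ A).flip c) with hφdef
  have hφ : ∀ f c x y, φ f c x y = f (x * c * y) := by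
    intro f c x y; simp [hφdef, mul_assoc]
  -- f applied to τ c * z and z * τ c as series
  have hR : ∀ (f : A →L[ℂ] ℂ) (c z : A),
      f ((∑' n, T n) c * z) = ∑' n, f (a n * c * b n * z) := by
    intro f c z
    have h := (f.comp ((ContinuousLinearMap.mul ℂ A).flip z)).map_tsum (hsummand c)
    simp only [ContinuousLinearMap.comp_apply, ContinuousLinearMap.flip_apply,
      ContinuousLinearMap.mul_apply'] at h
    rw [hτ, h]
  have hL : ∀ (f : A →L[ℂ] ℂ) (c z : A),
      f (z * (∑' n, T n) c) = ∑' n, f (z * (a n * c * b n)) := by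
    intro f c z
    have h := (f.comp (ContinuousLinearMap.mul ℂ A z)).map_tsum (hsummand c)
    simp only [ContinuousLinearMap.comp_apply, ContinuousLinearMap.mul_apply'] at h
    rw [hτ, h]
  have hF : ∀ (f : A →L[ℂ] ℂ) (c : A),
      f ((∑' n, T n) c) = ∑' n, f (a n * c * b n) := by
    intro f c
    rw [hτ, f.map_tsum (hsummand c)]
  refine ⟨∑' n, T n, hτ, ?_, ?_, ?_⟩
  · -- centrality
    intro c z
    refine hsep _ _ fun f => ?_
    have h3 := hmod (φ f c) z
    simp only [hφ] at h3
    rw [hR f c z, hL f c z]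
    calc ∑' n, f (a n * c * b n * z) = ∑' n, f (a n * c * (b n * z)) := by
          simp only [mul_assoc]
      _ = ∑' n, f (z * a n * c * b n) := h3.symm
      _ = ∑' n, f (z * (a n * c * b n)) := by simp only [mul_assoc]
  · -- normalization
    have h1 : (∑' n, T n) 1 = ∑' n, a n * b n := by
      rw [hτ]; exact tsum_congr fun n => by rw [mul_one]
    rw [h1, hunit]
  · -- trace property
    intro c c'
    refine hsep _ _ fun f => ?_
    rw [hF f (c * c'), hF f (c' * c)]
    have hs1 := hsymm (φ f (c * c'))
    have hs2 := hsymm (φ f (c' * c))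
    simp only [hφ] at hs1 hs2
    have h3 := hmod ((φ f c).flip) c'
    simp only [ContinuousLinearMap.flip_apply, hφ] at h3
    -- h3 : ∑' f (b n * c * (c' * a n)) = ∑' f ((b n * c') * c * a n)
    calc ∑' n, f (a n * (c * c') * b n) = ∑' n, f (b n * (c * c') * a n) := hs1
      _ = ∑' n, f (b n * c * (c' * a n)) := by simp only [mul_assoc]
      _ = ∑' n, f (b n * c' * c * a n) := h3
      _ = ∑' n, f (b n * (c' * c) * a n) := by simp only [mul_assoc]
      _ = ∑' n, f (a n * (c' * c) * b n) := hs2.symm
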